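/- arXiv:1712.04503 — 3 statements merged into one kernel-verified Lean document; each statement's English description precedes it below -/
import Mathlib

section
/- Let A = ⊕_{i<ω} ℤ/p^{n_i}ℤ where (n_i) is a strictly increasing sequence of positive integers with 2·n_i < n_{i+1} for all i. Then for each k ≥ 1, the subgroup of C = ℤ/p^{n_{k+1}}ℤ defined by {x : p^{2n_i} | p^{n_i}·x for all i ≠ k} strictly contains the subgroup defined by {x : p^{2n_i} | p^{n_i}·x for all i}; indeed the former equals p^{n_{k-1}}C and the latter equals p^{n_k}C. -/
lemma key7 (p : ℕ) (hp : p.Prime) (N a b : ℕ) (hab : a ≤ b) (hbN : b ≤ N) (x : ZMod (p^N)) :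
    (∃ y : ZMod (p^N), p ^ b • y = p ^ a • x) ↔ p ^ (b - a) ∣ x.val := by
  haveI : NeZero (p ^ N) := ⟨pow_ne_zero _ hp.pos.ne'⟩
  constructor
  · rintro ⟨y, hy⟩
    rw [nsmul_eq_mul, nsmul_eq_mul] at hy
    have hcast : ((p ^ b * y.val : ℕ) : ZMod (p^N)) = ((p ^ a * x.val : ℕ) : ZMod (p^N)) := by
      push_cast [ZMod.natCast_val, ZMod.cast_id]
      exact_mod_cast hy
    have hmod : (p ^ b * y.val) ≡ (p ^ a * x.val) [MOD p ^ N] :=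
      (ZMod.natCast_eq_natCast_iff _ _ _).mp hcast
    have hdvdN : ((p:ℤ) ^ N) ∣ ((p:ℤ) ^ a * x.val - (p:ℤ) ^ b * y.val) := by
      have := (Nat.modEq_iff_dvd).mp hmod
      push_cast at this ⊢
      exact this
    have hb : ((p:ℤ) ^ b) ∣ ((p:ℤ) ^ a * x.val) := by
      have h1 : ((p:ℤ) ^ b) ∣ ((p:ℤ) ^ N) := pow_dvd_pow _ hbN
      have := dvd_add (h1.trans hdvdN) (Dvd.intro _ rfl : ((p:ℤ)^b) ∣ (p:ℤ)^b * y.val)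
      simpa using this
    have hb' : ((p:ℤ) ^ a * (p:ℤ) ^ (b - a)) ∣ ((p:ℤ) ^ a * x.val) := by
      rwa [← pow_add, Nat.add_sub_cancel' hab]
    have : ((p:ℤ) ^ (b - a)) ∣ (x.val : ℤ) :=
      (mul_dvd_mul_iff_left (pow_ne_zero _ (by exact_mod_cast hp.pos.ne') : ((p:ℤ)^a) ≠ 0)).mp hb'
    exact_mod_cast this
  · rintro ⟨t, ht⟩
    refine ⟨(t : ZMod (p^N)), ?_⟩
    rw [nsmul_eq_mul, nsmul_eq_mul]
    have : ((p ^ b * t : ℕ) : ZMod (p^N)) = ((p ^ a * x.val : ℕ) : ZMod (p^N)) := by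
      congr 1
      rw [← Nat.add_sub_cancel' hab, pow_add, mul_assoc, ← ht]
    push_cast [ZMod.natCast_val, ZMod.cast_id] at this
    exact_mod_cast this

lemma triv7 (p : ℕ) (hp : p.Prime) (N a b : ℕ) (haN : N ≤ a) (x : ZMod (p^N)) :
    ∃ y : ZMod (p^N), p ^ b • y = p ^ a • x := by
  refine ⟨0, ?_⟩
  rw [smul_zero, nsmul_eq_mul]
  have : ((p ^ a : ℕ) : ZMod (p^N)) = 0 :=
    (ZMod.natCast_eq_zero_iff _ _).mpr (pow_dvd_pow _ haN)
  rw [this, zero_mul]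

/-- Let `(n i)` be strictly increasing positive integers with `2·n i < n (i+1)` and `k ≥ 1`.
In `C = ℤ/p^{n (k+1)}ℤ`, the subgroup `{x : ∀ i ≠ k, p^{2 n i} ∣ p^{n i}·x}` equals
`p^{n (k-1)}·C` and strictly contains `{x : ∀ i, p^{2 n i} ∣ p^{n i}·x} = p^{n k}·C`. -/
theorem stmt7 (p : ℕ) (hp : p.Prime) (n : ℕ → ℕ) (hpos : ∀ i, 0 < n i)
    (hmono : StrictMono n) (hgrow : ∀ i, 2 * n i < n (i + 1)) (k : ℕ) (hk : 1 ≤ k) :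
    ({x : ZMod (p ^ n (k + 1)) | ∀ i, i ≠ k →
        ∃ y : ZMod (p ^ n (k + 1)), p ^ (2 * n i) • y = p ^ (n i) • x} =
      {x : ZMod (p ^ n (k + 1)) | ∃ y : ZMod (p ^ n (k + 1)), x = p ^ n (k - 1) • y}) ∧
    ({x : ZMod (p ^ n (k + 1)) | ∀ i,
        ∃ y : ZMod (p ^ n (k + 1)), p ^ (2 * n i) • y = p ^ (n i) • x} =
      {x : ZMod (p ^ n (k + 1)) | ∃ y : ZMod (p ^ n (k + 1)), x = p ^ n k • y}) ∧
    ({x : ZMod (p ^ n (k + 1)) | ∀ i,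
        ∃ y : ZMod (p ^ n (k + 1)), p ^ (2 * n i) • y = p ^ (n i) • x} ⊂
      {x : ZMod (p ^ n (k + 1)) | ∀ i, i ≠ k →
        ∃ y : ZMod (p ^ n (k + 1)), p ^ (2 * n i) • y = p ^ (n i) • x}) := by
  haveI : NeZero (p ^ n (k + 1)) := ⟨pow_ne_zero _ hp.pos.ne'⟩
  -- condition characterization for i ≤ k
  have hcond : ∀ (i : ℕ) (x : ZMod (p ^ n (k + 1))), i ≤ k →
      ((∃ y : ZMod (p ^ n (k + 1)), p ^ (2 * n i) • y = p ^ (n i) • x) ↔ p ^ (n i) ∣ x.val) := by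
    intro i x hi
    have h1 : 2 * n i ≤ n (k + 1) :=
      le_trans (hgrow i).le (hmono.monotone (by omega))
    have h2 : 2 * n i - n i = n i := by omega
    have := key7 p hp (n (k + 1)) (n i) (2 * n i) (by omega) h1 x
    rwa [h2] at this
  -- principal ideal characterization
  have hgen : ∀ (c : ℕ) (x : ZMod (p ^ n (k + 1))), c ≤ n (k + 1) →
      ((∃ y : ZMod (p ^ n (k + 1)), x = p ^ c • y) ↔ p ^ c ∣ x.val) := by
    intro c x hc
    have := key7 p hp (n (k + 1)) 0 c (Nat.zero_le _) hc x
    simp only [pow_zero, one_smul, Nat.sub_zero] at this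
    rw [← this]
    exact ⟨fun ⟨y, hy⟩ => ⟨y, hy.symm⟩, fun ⟨y, hy⟩ => ⟨y, hy.symm⟩⟩
  have hA : ∀ x : ZMod (p ^ n (k + 1)),
      (∀ i, i ≠ k → ∃ y : ZMod (p ^ n (k + 1)), p ^ (2 * n i) • y = p ^ (n i) • x) ↔
        p ^ n (k - 1) ∣ x.val := by
    intro x
    constructor
    · intro h
      exact (hcond (k - 1) x (by omega)).mp (h (k - 1) (by omega))
    · intro h i hi
      rcases le_or_gt i k with hik | hik
      · have hik' : i ≤ k - 1 := by omega
        refine (hcond i x hik).mpr (dvd_trans ?_ h)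
        exact pow_dvd_pow _ (hmono.monotone hik')
      · exact triv7 p hp _ _ _ (hmono.monotone (by omega)) x
  have hB : ∀ x : ZMod (p ^ n (k + 1)),
      (∀ i, ∃ y : ZMod (p ^ n (k + 1)), p ^ (2 * n i) • y = p ^ (n i) • x) ↔
        p ^ n k ∣ x.val := by
    intro x
    constructor
    · intro h
      exact (hcond k x le_rfl).mp (h k)
    · intro h i
      rcases le_or_gt i k with hik | hik
      · exact (hcond i x hik).mpr (dvd_trans (pow_dvd_pow _ (hmono.monotone hik)) h)
      · exact triv7 p hp _ _ _ (hmono.monotone (by omega)) x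
  have hkk1 : n (k - 1) ≤ n (k + 1) := hmono.monotone (by omega)
  have eq1 : {x : ZMod (p ^ n (k + 1)) | ∀ i, i ≠ k →
        ∃ y : ZMod (p ^ n (k + 1)), p ^ (2 * n i) • y = p ^ (n i) • x} =
      {x : ZMod (p ^ n (k + 1)) | ∃ y : ZMod (p ^ n (k + 1)), x = p ^ n (k - 1) • y} := by
    ext x
    simp only [Set.mem_setOf_eq]
    rw [hA x, hgen (n (k - 1)) x hkk1]
  have eq2 : {x : ZMod (p ^ n (k + 1)) | ∀ i,
        ∃ y : ZMod (p ^ n (k + 1)), p ^ (2 * n i) • y = p ^ (n i) • x} =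
      {x : ZMod (p ^ n (k + 1)) | ∃ y : ZMod (p ^ n (k + 1)), x = p ^ n k • y} := by
    ext x
    simp only [Set.mem_setOf_eq]
    rw [hB x, hgen (n k) x (hmono.monotone (by omega))]
  refine ⟨eq1, eq2, ?_⟩
  constructor
  · intro x hx i hi
    exact hx i
  · intro hsub
    set x₀ : ZMod (p ^ n (k + 1)) := ((p ^ n (k - 1) : ℕ) : ZMod (p ^ n (k + 1))) with hx₀
    have hval : x₀.val = p ^ n (k - 1) :=
      ZMod.val_cast_of_lt (Nat.pow_lt_pow_right hp.one_lt (hmono (by omega)))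
    have hmem : x₀ ∈ {x : ZMod (p ^ n (k + 1)) | ∀ i, i ≠ k →
        ∃ y : ZMod (p ^ n (k + 1)), p ^ (2 * n i) • y = p ^ (n i) • x} := by
      rw [Set.mem_setOf_eq]
      exact (hA x₀).mpr (by rw [hval])
    have hmem' := hsub hmem
    rw [Set.mem_setOf_eq] at hmem'
    have := (hB x₀).mp hmem'
    rw [hval] at this
    have hle : n k ≤ n (k - 1) :=
      (Nat.pow_dvd_pow_iff_le_right hp.one_lt).mp this
    have : n (k - 1) < n k := hmono (by omega)
    omega
end

section
/- Let A be an abelian group and H₀, …, H_{n-1} subgroups of A, and let β < n. Suppose for each i < ω there is an element a_i that lies in a fixed coset c_α + H_α for every α ≠ β and such that the cosets a_i + H_β are pairwise distinct. Then the cosets (a_i − a_0) + (∩_{α<n} H_α) are pairwise distinct elements of the quotient (∩_{α≠β} H_α)/(∩_{α<n} H_α), and hence the index [∩_{α≠β} H_α : ∩_{α<n} H_α] is at least ω (infinite). -/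
/-- If each `a i` lies in a fixed coset `c α + H α` for every `α ≠ β` while the cosets
`a i + H β` are pairwise distinct, then the cosets `(a i - a 0) + ⋂ H α` are pairwise
distinct in `(⋂_{α ≠ β} H α)/(⋂ H α)`, so the index `[⋂_{α ≠ β} H α : ⋂ H α]` is infinite. -/
theorem stmt12 (A : Type*) [AddCommGroup A] (n : ℕ) (H : Fin n → AddSubgroup A) (β : Fin n)
    (c : Fin n → A) (a : ℕ → A)
    (hcoset : ∀ (i : ℕ) (α : Fin n), α ≠ β → a i - c α ∈ H α)
    (hdist : ∀ i j : ℕ, i ≠ j → a i - a j ∉ H β) :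
    (∀ i j : ℕ, i ≠ j → (a i - a 0) - (a j - a 0) ∉ ⨅ α, H α) ∧
    ((⨅ α, H α).addSubgroupOf (⨅ α ∈ ({β}ᶜ : Set (Fin n)), H α)).index = 0 := by
  have hle : (⨅ α, H α) ≤ H β := iInf_le _ β
  have key : ∀ i j : ℕ, i ≠ j → a i - a j ∉ ⨅ α, H α := by
    intro i j hij h
    exact hdist i j hij (hle h)
  constructor
  · intro i j hij h
    have : a i - a j ∈ ⨅ α, H α := by
      have : (a i - a 0) - (a j - a 0) = a i - a j := by abel
      rwa [this] at h
    exact key i j hij this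
  · set K : AddSubgroup A := ⨅ α ∈ ({β}ᶜ : Set (Fin n)), H α with hK
    have hmem : ∀ i : ℕ, a i - a 0 ∈ K := by
      intro i
      rw [hK]
      simp only [AddSubgroup.mem_iInf, Set.mem_compl_iff, Set.mem_singleton_iff]
      intro α hα
      have h1 := hcoset i α hα
      have h2 := hcoset 0 α hα
      have : a i - a 0 = (a i - c α) - (a 0 - c α) := by abel
      rw [this]
      exact sub_mem h1 h2
    set f : ℕ → K ⧸ ((⨅ α, H α).addSubgroupOf K) :=
      fun i => QuotientAddGroup.mk ⟨a i - a 0, hmem i⟩ with hf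
    have hinj : Function.Injective f := by
      intro i j hij
      by_contra hne
      rw [hf] at hij
      simp only [QuotientAddGroup.eq] at hij
      have : (a j - a 0) - (a i - a 0) ∈ (⨅ α, H α) := by
        simpa [AddSubgroup.mem_addSubgroupOf, neg_add_eq_sub] using hij
      have : a j - a i ∈ ⨅ α, H α := by
        have he : (a j - a 0) - (a i - a 0) = a j - a i := by abel
        rwa [he] at this
      exact key j i (Ne.symm hne) this
    have : Infinite (K ⧸ ((⨅ α, H α).addSubgroupOf K)) := Infinite.of_injective f hinj
    exact AddSubgroup.index_eq_zero_iff_infinite.mpr this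
end

section
/- If L and L' are join-semilattices with breadth d and d' respectively, then the product semilattice L × L' has breadth at most d + d'. (Breadth of a join-semilattice L is the least integer d such that for all x₁,…,x_n ∈ L with n > d there are d indices i₁ < … < i_d with x₁ ∧ … ∧ x_n = x_{i₁} ∧ … ∧ x_{i_d}, meets taken where they exist.) -/
/-- A meet-semilattice has breadth at most `d` if the meet of any `n > d` elements equals
the meet of some (at most) `d` of them. -/
def HasBreadthLE (L : Type*) [SemilatticeInf L] (d : ℕ) : Prop :=
  ∀ (n : ℕ) (x : Fin n → L) (h : d < n),
    ∃ (t : Finset (Fin n)) (ht : t.Nonempty), t.card ≤ d ∧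
      Finset.univ.inf'
        (Finset.univ_nonempty_iff.mpr ⟨⟨0, Nat.lt_of_le_of_lt (Nat.zero_le d) h⟩⟩) x =
        t.inf' ht x

lemma fst_inf' {L L' : Type*} [SemilatticeInf L] [SemilatticeInf L'] {β : Type*}
    (s : Finset β) (hs : s.Nonempty) (f : β → L × L') :
    (s.inf' hs f).1 = s.inf' hs (fun i => (f i).1) :=
  map_finset_inf' (⟨Prod.fst, fun _ _ => rfl⟩ : InfHom (L × L') L) hs f

lemma snd_inf' {L L' : Type*} [SemilatticeInf L] [SemilatticeInf L'] {β : Type*}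
    (s : Finset β) (hs : s.Nonempty) (f : β → L × L') :
    (s.inf' hs f).2 = s.inf' hs (fun i => (f i).2) :=
  map_finset_inf' (⟨Prod.snd, fun _ _ => rfl⟩ : InfHom (L × L') L') hs f

/-- If `L` has breadth at most `d` and `L'` has breadth at most `d'`, then the product
semilattice `L × L'` has breadth at most `d + d'`. -/
theorem stmt15 (L L' : Type*) [SemilatticeInf L] [SemilatticeInf L'] (d d' : ℕ)
    (h : HasBreadthLE L d) (h' : HasBreadthLE L' d') :
    HasBreadthLE (L × L') (d + d') := by
  intro n x hn
  obtain ⟨t, ht, hc, he⟩ := h n (fun i => (x i).1)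
    (lt_of_le_of_lt (Nat.le_add_right d d') hn)
  obtain ⟨t', ht', hc', he'⟩ := h' n (fun i => (x i).2)
    (lt_of_le_of_lt (Nat.le_add_left d' d) hn)
  have hne : (t ∪ t').Nonempty := ht.mono Finset.subset_union_left
  refine ⟨t ∪ t', hne, (Finset.card_union_le _ _).trans (Nat.add_le_add hc hc'), ?_⟩
  apply le_antisymm
  · exact Finset.inf'_mono _ (Finset.subset_univ _) hne
  · rw [Prod.le_def]
    constructor
    · rw [fst_inf', fst_inf', he]
      exact Finset.inf'_mono _ Finset.subset_union_left ht
    · rw [snd_inf', snd_inf', he']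
      exact Finset.inf'_mono _ Finset.subset_union_right ht'
end
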